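/- (Classification Table, case f = xΦ(u/x): admitted additional symmetry x∂_x + y∂_y + t∂_t + u∂_u.) Let Φ : ℝ → ℝ be any function and let u : ℝ³ → ℝ be C² and satisfy ∂u/∂t = x·Φ(u/x)·(u_{xx}+u_{yy}) at every point (x,y,t) with x ≠ 0. Then for every s ∈ ℝ, the function v(x,y,t) = e^s·u(e^{−s}x, e^{−s}y, e^{−s}t) also satisfies ∂v/∂t = x·Φ(v/x)·(v_{xx}+v_{yy}) at every point (x,y,t) with x ≠ 0. -/

import Mathlib

/-- ∂u/∂x at (x,y,t) for u : ℝ³ → ℝ with argument order (x,y,t). -/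
noncomputable def px (u : ℝ × ℝ × ℝ → ℝ) (x y t : ℝ) : ℝ :=
  deriv (fun a => u (a, y, t)) x

/-- ∂u/∂y at (x,y,t). -/
noncomputable def py (u : ℝ × ℝ × ℝ → ℝ) (x y t : ℝ) : ℝ :=
  deriv (fun a => u (x, a, t)) y

/-- ∂u/∂t at (x,y,t). -/
noncomputable def pt (u : ℝ × ℝ × ℝ → ℝ) (x y t : ℝ) : ℝ :=
  deriv (fun a => u (x, y, a)) t

/-- ∂²u/∂x² at (x,y,t). -/
noncomputable def pxx (u : ℝ × ℝ × ℝ → ℝ) (x y t : ℝ) : ℝ :=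
  deriv (fun a => px u a y t) x

/-- ∂²u/∂y² at (x,y,t). -/
noncomputable def pyy (u : ℝ × ℝ × ℝ → ℝ) (x y t : ℝ) : ℝ :=
  deriv (fun a => py u x a t) y

/-- u satisfies the 2D nonlinear heat equation
    u_t = f(x,y,u,u_x,u_y)·(u_xx + u_yy) everywhere on ℝ³. -/
def IsHeatSol (f : ℝ → ℝ → ℝ → ℝ → ℝ → ℝ) (u : ℝ × ℝ × ℝ → ℝ) : Prop :=
  ∀ x y t : ℝ,
    pt u x y t =
      f x y (u (x, y, t)) (px u x y t) (py u x y t) *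
        (pxx u x y t + pyy u x y t)

/-- Chain rule for scaling in one variable. -/
lemma deriv_scale_aux (g : ℝ → ℝ) (hg : Differentiable ℝ g) (c x : ℝ) :
    deriv (fun a => g (c * a)) x = c * deriv g (c * x) := by
  have h := ((hg (c * x)).hasDerivAt.comp x ((hasDerivAt_id x).const_mul c))
  simpa [mul_comm, Function.comp_def] using h.deriv

lemma hasDerivAt_slice1 (u : ℝ × ℝ × ℝ → ℝ) (hu : Differentiable ℝ u) (x y t : ℝ) :
    HasDerivAt (fun a => u (a, y, t)) (fderiv ℝ u (x, y, t) (1, 0, 0)) x :=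
  (hu (x, y, t)).hasFDerivAt.comp_hasDerivAt x
    ((hasDerivAt_id x).prodMk ((hasDerivAt_const x y).prodMk (hasDerivAt_const x t)))

lemma hasDerivAt_slice2 (u : ℝ × ℝ × ℝ → ℝ) (hu : Differentiable ℝ u) (x y t : ℝ) :
    HasDerivAt (fun a => u (x, a, t)) (fderiv ℝ u (x, y, t) (0, 1, 0)) y :=
  (hu (x, y, t)).hasFDerivAt.comp_hasDerivAt y
    ((hasDerivAt_const y x).prodMk ((hasDerivAt_id y).prodMk (hasDerivAt_const y t)))

lemma px_eq_fderiv (u : ℝ × ℝ × ℝ → ℝ) (hu : Differentiable ℝ u) (x y t : ℝ) :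
    px u x y t = fderiv ℝ u (x, y, t) (1, 0, 0) :=
  (hasDerivAt_slice1 u hu x y t).deriv

lemma py_eq_fderiv (u : ℝ × ℝ × ℝ → ℝ) (hu : Differentiable ℝ u) (x y t : ℝ) :
    py u x y t = fderiv ℝ u (x, y, t) (0, 1, 0) :=
  (hasDerivAt_slice2 u hu x y t).deriv

lemma diff_px_aux (u : ℝ × ℝ × ℝ → ℝ) (hu : ContDiff ℝ 2 u) (y t : ℝ) :
    Differentiable ℝ (fun b => px u b y t) := by
  have hD : ContDiff ℝ 1 (fderiv ℝ u) := hu.fderiv_right (by norm_num)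
  have hud : Differentiable ℝ u := hu.differentiable (by norm_num)
  have : (fun b => px u b y t) = fun b => fderiv ℝ u (b, y, t) (1, 0, 0) := by
    funext b; exact px_eq_fderiv u hud b y t
  rw [this]
  exact (((hD.differentiable one_ne_zero).comp
    (differentiable_id.prodMk ((differentiable_const y).prodMk (differentiable_const t))))).clm_apply
    (differentiable_const _)

lemma diff_py_aux (u : ℝ × ℝ × ℝ → ℝ) (hu : ContDiff ℝ 2 u) (x t : ℝ) :
    Differentiable ℝ (fun b => py u x b t) := by
  have hD : ContDiff ℝ 1 (fderiv ℝ u) := hu.fderiv_right (by norm_num)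
  have hud : Differentiable ℝ u := hu.differentiable (by norm_num)
  have : (fun b => py u x b t) = fun b => fderiv ℝ u (x, b, t) (0, 1, 0) := by
    funext b; exact py_eq_fderiv u hud x b t
  rw [this]
  exact (((hD.differentiable one_ne_zero).comp
    ((differentiable_const x).prodMk (differentiable_id.prodMk (differentiable_const t)))).clm_apply
    (differentiable_const _))

/-- Classification table, case f = x·Φ(u/x): the equation admits the additional
    scaling symmetry x∂ₓ + y∂_y + t∂_t + u∂_u. -/
theorem scaling_symmetry_xPhi
    (Φ : ℝ → ℝ) (u : ℝ × ℝ × ℝ → ℝ) (hu : ContDiff ℝ 2 u)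
    (hsol : ∀ x y t : ℝ, x ≠ 0 →
      pt u x y t = x * Φ (u (x, y, t) / x) * (pxx u x y t + pyy u x y t))
    (s : ℝ) :
    ∀ x y t : ℝ, x ≠ 0 →
      pt (fun p => Real.exp s *
            u (Real.exp (-s) * p.1, Real.exp (-s) * p.2.1, Real.exp (-s) * p.2.2)) x y t =
        x * Φ ((Real.exp s *
            u (Real.exp (-s) * x, Real.exp (-s) * y, Real.exp (-s) * t)) / x) *
          (pxx (fun p => Real.exp s *
              u (Real.exp (-s) * p.1, Real.exp (-s) * p.2.1, Real.exp (-s) * p.2.2)) x y t +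
           pyy (fun p => Real.exp s *
              u (Real.exp (-s) * p.1, Real.exp (-s) * p.2.1, Real.exp (-s) * p.2.2)) x y t) := by
  intro x y t hx
  set E : ℝ := Real.exp s with hE
  set c : ℝ := Real.exp (-s) with hc
  have hEc : E * c = 1 := by
    rw [hE, hc, ← Real.exp_add, add_neg_cancel, Real.exp_zero]
  have hcne : c ≠ 0 := Real.exp_ne_zero _
  have hud : Differentiable ℝ u := hu.differentiable (by norm_num)
  set v : ℝ × ℝ × ℝ → ℝ := fun p => E * u (c * p.1, c * p.2.1, c * p.2.2) with hv
  -- first derivatives of v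
  have hpx : ∀ a b d : ℝ, px v a b d = E * c * px u (c * a) (c * b) (c * d) := by
    intro a b d
    have h1 : (fun w => v (w, b, d)) = fun w => E * (fun r => u (r, c * b, c * d)) (c * w) := by
      funext w; rfl
    have hg : Differentiable ℝ (fun r => u (r, c * b, c * d)) := fun r =>
      (hasDerivAt_slice1 u hud r (c * b) (c * d)).differentiableAt
    rw [px, h1, deriv_const_mul_field, deriv_scale_aux _ hg]
    ring_nf
    rfl
  have hpy : ∀ a b d : ℝ, py v a b d = E * c * py u (c * a) (c * b) (c * d) := by
    intro a b d
    have h1 : (fun w => v (a, w, d)) = fun w => E * (fun r => u (c * a, r, c * d)) (c * w) := by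
      funext w; rfl
    have hg : Differentiable ℝ (fun r => u (c * a, r, c * d)) := fun r =>
      (hasDerivAt_slice2 u hud (c * a) r (c * d)).differentiableAt
    rw [py, h1, deriv_const_mul_field, deriv_scale_aux _ hg]
    ring_nf
    rfl
  -- time derivative of v
  have hpt : pt v x y t = pt u (c * x) (c * y) (c * t) := by
    have hg : Differentiable ℝ (fun r => u (c * x, c * y, r)) := by
      intro r
      exact ((hud (c * x, c * y, r)).hasFDerivAt.comp_hasDerivAt r
        ((hasDerivAt_const r (c * x)).prodMk
          ((hasDerivAt_const r (c * y)).prodMk (hasDerivAt_id r)))).differentiableAt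
    have h1 : (fun w => v (x, y, w)) = fun w => E * (fun r => u (c * x, c * y, r)) (c * w) := by
      funext w; rfl
    rw [pt, h1, deriv_const_mul_field, deriv_scale_aux _ hg]
    have : E * (c * deriv (fun r => u (c * x, c * y, r)) (c * t)) =
        (E * c) * pt u (c * x) (c * y) (c * t) := by rw [pt]; ring
    rw [this, hEc, one_mul]
  -- second derivatives of v
  have hpxx : pxx v x y t = c * pxx u (c * x) (c * y) (c * t) := by
    have h1 : (fun a => px v a y t) = fun a => (fun b => px u b (c * y) (c * t)) (c * a) := by
      funext a; rw [hpx, hEc, one_mul]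
    rw [pxx, h1, deriv_scale_aux _ (diff_px_aux u hu (c * y) (c * t))]
    rfl
  have hpyy : pyy v x y t = c * pyy u (c * x) (c * y) (c * t) := by
    have h1 : (fun a => py v x a t) = fun a => (fun b => py u (c * x) b (c * t)) (c * a) := by
      funext a; rw [hpy, hEc, one_mul]
    rw [pyy, h1, deriv_scale_aux _ (diff_py_aux u hu (c * x) (c * t))]
    rfl
  -- conclude
  have hcx : c * x ≠ 0 := mul_ne_zero hcne hx
  have hs := hsol (c * x) (c * y) (c * t) hcx
  have harg : u (c * x, c * y, c * t) / (c * x) =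
      E * u (c * x, c * y, c * t) / x := by
    field_simp
    linear_combination (-(u (c * x, c * y, c * t))) * hEc
  show pt v x y t = x * Φ (E * u (c * x, c * y, c * t) / x) * (pxx v x y t + pyy v x y t)
  rw [hpt, hpxx, hpyy, hs, harg]
  ring
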